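/- arXiv:1011.0048 — 2 statements merged into one kernel-verified Lean document; each statement's English description precedes it below -/
import Mathlib

section
/- Every algebra automorphism of the Cayley–Dickson doubling of the quaternions preserves the norm N(a,b) = |a|² + |b|², i.e., N(α(x)) = N(x) for all x. -/
/-- Cayley–Dickson doubling of the quaternions: multiplication on ℍ × ℍ. -/
noncomputable def omul (x y : Quaternion ℝ × Quaternion ℝ) : Quaternion ℝ × Quaternion ℝ :=
  (x.1 * y.1 - star y.2 * x.2, x.2 * star y.1 + y.2 * x.1)

/-- The map γ(a,b) = (a,-b). -/
def gam (x : Quaternion ℝ × Quaternion ℝ) : Quaternion ℝ × Quaternion ℝ := (x.1, -x.2)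

/-- Conjugation on the doubling. -/
def oconj (x : Quaternion ℝ × Quaternion ℝ) : Quaternion ℝ × Quaternion ℝ := (star x.1, -x.2)

/-- The norm N(a,b) = |a|² + |b|². -/
noncomputable def oN (x : Quaternion ℝ × Quaternion ℝ) : ℝ := ‖x.1‖^2 + ‖x.2‖^2

noncomputable abbrev oe : Quaternion ℝ × Quaternion ℝ := (1, 0)

lemma osq (x : Quaternion ℝ × Quaternion ℝ) :
    omul x x = (2 * x.1.re) • x - (oN x) • oe := by
  have h1 : ‖x.1‖^2 = Quaternion.normSq x.1 := by
    rw [sq, ← Quaternion.normSq_eq_norm_mul_self]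
  have h2 : ‖x.2‖^2 = Quaternion.normSq x.2 := by
    rw [sq, ← Quaternion.normSq_eq_norm_mul_self]
  unfold omul oN oe
  ext <;>
    simp [h1, h2, Quaternion.normSq_def', Quaternion.re_mul, Quaternion.imI_mul,
      Quaternion.imJ_mul, Quaternion.imK_mul, Quaternion.re_one, Quaternion.imI_one,
      Quaternion.imJ_one, Quaternion.imK_one] <;> ring

lemma omul_oe_left (y : Quaternion ℝ × Quaternion ℝ) : omul oe y = y := by
  simp [omul]

lemma omul_oe_right (y : Quaternion ℝ × Quaternion ℝ) : omul y oe = y := by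
  simp [omul]

lemma oN_smul_oe (c : ℝ) : oN (c • oe) = c ^ 2 := by
  simp [oN, abs_of_nonneg, norm_smul, sq_abs]

/-- Every algebra automorphism of the doubling preserves the norm N. -/
theorem stmt11 : ∀ α : (Quaternion ℝ × Quaternion ℝ) ≃ₗ[ℝ] (Quaternion ℝ × Quaternion ℝ),
    (∀ x y, α (omul x y) = omul (α x) (α y)) →
    ∀ x, oN (α x) = oN x := by
  intro α hmul x
  -- α fixes oe
  have hαe : α oe = oe := by
    have hleft : ∀ z, omul (α oe) z = z := by
      intro z
      obtain ⟨y, rfl⟩ := α.surjective z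
      rw [← hmul, omul_oe_left]
    have := hleft oe
    rwa [omul_oe_right] at this
  by_cases h : ∃ c : ℝ, x = c • oe
  · obtain ⟨c, rfl⟩ := h
    rw [map_smul, hαe, oN_smul_oe]
  · -- quadratic relations
    have e1 : omul (α x) (α x) = (2 * x.1.re) • (α x) - (oN x) • oe := by
      rw [← hmul, osq, map_sub, map_smul, map_smul, hαe]
    have e2 : omul (α x) (α x) = (2 * (α x).1.re) • (α x) - (oN (α x)) • oe :=
      osq (α x)
    have key : (2 * x.1.re - 2 * (α x).1.re) • (α x)
        = (oN x - oN (α x)) • oe := by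
      have h' := e1.symm.trans e2
      rw [sub_smul, sub_smul]
      linear_combination (norm := module) h'
    by_cases ht : 2 * x.1.re - 2 * (α x).1.re = 0
    · rw [ht, zero_smul] at key
      rcases smul_eq_zero.mp key.symm with h0 | h0
      · linarith
      · exact absurd (congrArg Prod.fst h0) (by simp)
    · exfalso
      apply h
      set t := 2 * x.1.re - 2 * (α x).1.re
      have : α x = (t⁻¹ * (oN x - oN (α x))) • oe := by
        rw [mul_smul, ← key, ← mul_smul, inv_mul_cancel₀ ht, one_smul]
      exact ⟨t⁻¹ * (oN x - oN (α x)), α.injective (by rw [map_smul, hαe]; exact this)⟩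
end

section
/- The fixed-point set of the automorphism γ₁(a,m) = (conj(a), conj(m)) of the algebra ℂ ⊕ ℂ³ is ℝ ⊕ ℝ³, and with the induced multiplication (a,m)(b,n) = (ab - ⟨m,n⟩, a·n + b·m - m × n) it is a 4-dimensional real algebra isomorphic to the quaternions. -/
/-- The octonion-type multiplication on ℂ × ℂ³. -/
noncomputable def cmul (x y : ℂ × (Fin 3 → ℂ)) : ℂ × (Fin 3 → ℂ) :=
  (x.1 * y.1 - ∑ i, x.2 i * star (y.2 i),
   x.1 • y.2 + (star y.1) • x.2 - fun i => star (crossProduct x.2 y.2 i))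

/-- The map γ₁(a,m) = (conj a, conj m). -/
def gam1 (x : ℂ × (Fin 3 → ℂ)) : ℂ × (Fin 3 → ℂ) := (star x.1, fun i => star (x.2 i))

/-- The norm N(a,m) = |a|² + Σ |mᵢ|². -/
noncomputable def cN (x : ℂ × (Fin 3 → ℂ)) : ℝ := ‖x.1‖^2 + ∑ i, ‖x.2 i‖^2

/-- The real multiplication induced on ℝ ⊕ ℝ³: (a,m)(b,n) = (ab - m⬝n, a·n + b·m - m×n). -/
noncomputable def rmul (x y : ℝ × (Fin 3 → ℝ)) : ℝ × (Fin 3 → ℝ) :=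
  (x.1 * y.1 - ∑ i, x.2 i * y.2 i,
   x.1 • y.2 + y.1 • x.2 - crossProduct x.2 y.2)

/-- The inclusion of ℝ ⊕ ℝ³ into ℂ ⊕ ℂ³. -/
def incl (x : ℝ × (Fin 3 → ℝ)) : ℂ × (Fin 3 → ℂ) := ((x.1 : ℂ), fun i => (x.2 i : ℂ))
noncomputable def eQ : (ℝ × (Fin 3 → ℝ)) ≃ₗ[ℝ] Quaternion ℝ where
  toFun x := ⟨x.1, -x.2 0, -x.2 1, -x.2 2⟩
  invFun q := (q.re, ![-q.imI, -q.imJ, -q.imK])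
  map_add' x y := by ext <;> simp <;> erw [QuaternionAlgebra.mk_add_mk] <;> ring
  map_smul' c x := by ext <;> erw [QuaternionAlgebra.smul_mk] <;> simp
  left_inv x := by
    ext i
    · rfl
    · fin_cases i <;> simp
  right_inv q := by ext <;> simp

theorem eQ_apply (x : ℝ × (Fin 3 → ℝ)) : eQ x = ⟨x.1, -x.2 0, -x.2 1, -x.2 2⟩ := rfl

/-- The fixed-point set of γ₁ is ℝ ⊕ ℝ³, the induced multiplication is rmul,
and (ℝ ⊕ ℝ³, rmul) is a 4-dimensional real algebra isomorphic to the quaternions. -/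
theorem stmt13 :
    (∀ x : ℂ × (Fin 3 → ℂ), gam1 x = x ↔ ∃ y : ℝ × (Fin 3 → ℝ), x = incl y) ∧
    (∀ y z : ℝ × (Fin 3 → ℝ), cmul (incl y) (incl z) = incl (rmul y z)) ∧
    Module.finrank ℝ (ℝ × (Fin 3 → ℝ)) = 4 ∧
    ∃ e : (ℝ × (Fin 3 → ℝ)) ≃ₗ[ℝ] Quaternion ℝ,
      e ((1 : ℝ), (0 : Fin 3 → ℝ)) = 1 ∧ ∀ y z, e (rmul y z) = e y * e z := by
  refine ⟨?_, ?_, ?_, eQ, ?_, ?_⟩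
  · intro x
    constructor
    · intro h
      have h1 : (starRingEnd ℂ) x.1 = x.1 := congrArg Prod.fst h
      have h2 : ∀ i, (starRingEnd ℂ) (x.2 i) = x.2 i := fun i =>
        congrFun (congrArg Prod.snd h) i
      refine ⟨(x.1.re, fun i => (x.2 i).re), ?_⟩
      have e1 : (x.1.re : ℂ) = x.1 := Complex.conj_eq_iff_re.mp h1
      ext i
      · exact e1.symm
      · exact (Complex.conj_eq_iff_re.mp (h2 i)).symm
    · rintro ⟨y, rfl⟩
      simp [gam1, incl, Prod.ext_iff]
  · intro y z
    unfold cmul rmul incl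
    ext i
    · simp [Complex.ext_iff, Fin.sum_univ_three]
    · simp only [cross_apply]
      fin_cases i <;>
        simp [Complex.ext_iff, Fin.sum_univ_three]
  · simp [Module.finrank_prod]
  · ext <;> simp [eQ_apply] <;> rfl
  · intro y z
    unfold rmul
    ext <;>
      simp [eQ_apply, Quaternion.re_mul, Quaternion.imI_mul, Quaternion.imJ_mul,
        Quaternion.imK_mul, Fin.sum_univ_three, cross_apply, Matrix.vecHead, Matrix.vecTail] <;> erw [QuaternionAlgebra.mk_mul_mk] <;> simp <;> ring
end
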